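/- Let n ≥ 1 and let ρ and σ be n×n positive definite Hermitian complex matrices, each of trace 1. Then the quantum relative entropy is nonnegative: S(ρ‖σ) = Re (Matrix.trace (ρ * (log ρ − log σ))) ≥ 0. (This positivity of the relative entropy is the key inequality used in the first half of the proof of the paper's Theorem 2, where it is derived from ln λ ≤ λ − 1 via the spectral resolution of the relative modular operator.) -/

import Mathlib

open scoped ComplexOrder

/-- The matrix logarithm of a Hermitian complex matrix, defined through the continuous
functional calculus: apply `Real.log` to the eigenvalues in a spectral decomposition
(junk value `0` for non-Hermitian matrices). -/
noncomputable def matLog {n : ℕ} (M : Matrix (Fin n) (Fin n) ℂ) :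
    Matrix (Fin n) (Fin n) ℂ :=
  if hM : M.IsHermitian then
    (hM.eigenvectorUnitary : Matrix (Fin n) (Fin n) ℂ) *
      Matrix.diagonal (fun i => (Real.log (hM.eigenvalues i) : ℂ)) *
      star (hM.eigenvectorUnitary : Matrix (Fin n) (Fin n) ℂ)
  else 0

/-- The quantum relative entropy `S(ρ‖σ) = Re (Tr (ρ (log ρ − log σ)))` of two density
matrices. -/
noncomputable def relEnt {n : ℕ} (ρ σ : Matrix (Fin n) (Fin n) ℂ) : ℝ :=
  (Matrix.trace (ρ * (matLog ρ - matLog σ))).re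

lemma trace_conj_unit {n : ℕ} (U : Matrix.unitaryGroup (Fin n) ℂ) (M : Matrix (Fin n) (Fin n) ℂ) :
    Matrix.trace ((U : Matrix (Fin n) (Fin n) ℂ) * M * star (U : Matrix (Fin n) (Fin n) ℂ)) = Matrix.trace M := by
  rw [Matrix.trace_mul_comm, ← mul_assoc, (Matrix.mem_unitaryGroup_iff').mp U.2, one_mul]

lemma trace_DWEW {n : ℕ} (W : Matrix (Fin n) (Fin n) ℂ) (d e : Fin n → ℝ) :
    Matrix.trace (Matrix.diagonal (fun i => (d i : ℂ)) * W * Matrix.diagonal (fun j => (e j : ℂ)) * star W)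
      = ((∑ i, ∑ j, d i * e j * Complex.normSq (W i j) : ℝ) : ℂ) := by
  rw [Matrix.trace]
  push_cast
  apply Finset.sum_congr rfl
  intro i _
  rw [Matrix.diag, Matrix.mul_apply]
  apply Finset.sum_congr rfl
  intro j _
  rw [Matrix.mul_diagonal, Matrix.diagonal_mul, Matrix.star_apply]
  rw [RCLike.star_def, ← Complex.mul_conj]
  ring

lemma trace_form {n : ℕ} (U V : Matrix.unitaryGroup (Fin n) ℂ) (d e : Fin n → ℝ) :
    Matrix.trace (((U : Matrix (Fin n) (Fin n) ℂ) * Matrix.diagonal (fun i => (d i : ℂ)) * star (U : Matrix (Fin n) (Fin n) ℂ)) *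
        ((V : Matrix (Fin n) (Fin n) ℂ) * Matrix.diagonal (fun j => (e j : ℂ)) * star (V : Matrix (Fin n) (Fin n) ℂ)))
      = ((∑ i, ∑ j, d i * e j *
          Complex.normSq ((star (U : Matrix (Fin n) (Fin n) ℂ) * (V : Matrix (Fin n) (Fin n) ℂ)) i j) : ℝ) : ℂ) := by
  set Uc : Matrix (Fin n) (Fin n) ℂ := (U : Matrix (Fin n) (Fin n) ℂ) with hUc
  set Vc : Matrix (Fin n) (Fin n) ℂ := (V : Matrix (Fin n) (Fin n) ℂ) with hVc
  have hUU : Uc * star Uc = 1 := (Matrix.mem_unitaryGroup_iff).mp U.2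
  have key : (Uc * Matrix.diagonal (fun i => (d i : ℂ)) * star Uc) *
        (Vc * Matrix.diagonal (fun j => (e j : ℂ)) * star Vc)
      = Uc * (Matrix.diagonal (fun i => (d i : ℂ)) * (star Uc * Vc) *
          Matrix.diagonal (fun j => (e j : ℂ)) * star (star Uc * Vc)) * star Uc := by
    conv_lhs => rw [← mul_one ((Uc * Matrix.diagonal (fun i => (d i : ℂ)) * star Uc) *
        (Vc * Matrix.diagonal (fun j => (e j : ℂ)) * star Vc)), ← hUU]
    simp only [StarMul.star_mul, star_star, mul_assoc]
  rw [key, trace_conj_unit U, trace_DWEW]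

lemma klein_term (p q : ℝ) (hp : 0 < p) (hq : 0 < q) :
    p - q ≤ p * (Real.log p - Real.log q) := by
  have h := Real.log_le_sub_one_of_pos (div_pos hq hp)
  rw [Real.log_div hq.ne' hp.ne'] at h
  have h2 := mul_le_mul_of_nonneg_left h hp.le
  rw [mul_sub, mul_sub, mul_one, mul_div_cancel₀ _ hp.ne'] at h2
  linarith


/-- **Nonnegativity of the quantum relative entropy** (the key inequality in the first
half of the proof of Theorem 2): for positive definite density matrices `ρ`, `σ`,
`S(ρ‖σ) = Re (Tr (ρ (log ρ − log σ))) ≥ 0`. -/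
theorem relEnt_nonneg {n : ℕ} (hn : 1 ≤ n) (ρ σ : Matrix (Fin n) (Fin n) ℂ)
    (hρ : ρ.PosDef) (hσ : σ.PosDef) (hρtr : Matrix.trace ρ = 1)
    (hσtr : Matrix.trace σ = 1) :
    0 ≤ relEnt ρ σ := by
  classical
  have hρh : ρ.IsHermitian := hρ.1
  have hσh : σ.IsHermitian := hσ.1
  set U := hρh.eigenvectorUnitary with hU
  set V := hσh.eigenvectorUnitary with hV
  set p := hρh.eigenvalues with hp
  set q := hσh.eigenvalues with hq
  set W : Matrix (Fin n) (Fin n) ℂ :=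
    star (U : Matrix (Fin n) (Fin n) ℂ) * (V : Matrix (Fin n) (Fin n) ℂ) with hW
  set c : Fin n → Fin n → ℝ := fun i j => Complex.normSq (W i j) with hc
  have hppos : ∀ i, 0 < p i := fun i => hρ.eigenvalues_pos i
  have hqpos : ∀ i, 0 < q i := fun i => hσ.eigenvalues_pos i
  -- spectral decompositions
  have hρspec : ρ = (U : Matrix (Fin n) (Fin n) ℂ) *
      Matrix.diagonal (fun i => (p i : ℂ)) * star (U : Matrix (Fin n) (Fin n) ℂ) := by
    exact hρh.spectral_theorem
  have hσspec : σ = (V : Matrix (Fin n) (Fin n) ℂ) *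
      Matrix.diagonal (fun i => (q i : ℂ)) * star (V : Matrix (Fin n) (Fin n) ℂ) := by
    exact hσh.spectral_theorem
  have hlogρ : matLog ρ = (U : Matrix (Fin n) (Fin n) ℂ) *
      Matrix.diagonal (fun i => (Real.log (p i) : ℂ)) * star (U : Matrix (Fin n) (Fin n) ℂ) := by
    rw [matLog, dif_pos hρh]
  have hlogσ : matLog σ = (V : Matrix (Fin n) (Fin n) ℂ) *
      Matrix.diagonal (fun i => (Real.log (q i) : ℂ)) * star (V : Matrix (Fin n) (Fin n) ℂ) := by
    rw [matLog, dif_pos hσh]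
  -- W is unitary
  have hWmem : W ∈ Matrix.unitaryGroup (Fin n) ℂ := mul_mem (Unitary.star_mem U.2) V.2
  have hWW : W * star W = 1 := (Matrix.mem_unitaryGroup_iff).mp hWmem
  have hWW' : star W * W = 1 := (Matrix.mem_unitaryGroup_iff').mp hWmem
  have hcnn : ∀ i j, 0 ≤ c i j := fun i j => Complex.normSq_nonneg _
  have hrow : ∀ i, ∑ j, c i j = 1 := by
    intro i
    have h := congrFun (congrFun hWW i) i
    rw [Matrix.mul_apply] at h
    simp only [Matrix.star_apply, RCLike.star_def, Complex.mul_conj, Matrix.one_apply_eq] at h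
    exact_mod_cast h
  have hcol : ∀ j, ∑ i, c i j = 1 := by
    intro j
    have h := congrFun (congrFun hWW' j) j
    rw [Matrix.mul_apply] at h
    simp only [Matrix.star_apply, RCLike.star_def, Matrix.one_apply_eq] at h
    have h2 : ∑ i, ((Complex.normSq (W i j) : ℂ)) = 1 := by
      rw [← h]
      exact Finset.sum_congr rfl fun i _ => by rw [mul_comm, Complex.mul_conj]
    exact_mod_cast h2
  -- traces of ρ, σ as eigenvalue sums
  have hsump : ∑ i, p i = 1 := by
    have h : Matrix.trace ρ = ((∑ i, p i : ℝ) : ℂ) := by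
      rw [hρspec, trace_conj_unit U, Matrix.trace_diagonal]
      push_cast
      rfl
    rw [hρtr] at h
    exact_mod_cast h.symm
  have hsumq : ∑ i, q i = 1 := by
    have h : Matrix.trace σ = ((∑ i, q i : ℝ) : ℂ) := by
      rw [hσspec, trace_conj_unit V, Matrix.trace_diagonal]
      push_cast
      rfl
    rw [hσtr] at h
    exact_mod_cast h.symm
  -- the two trace terms
  have h1 : (Matrix.trace (ρ * matLog ρ)).re = ∑ i, p i * Real.log (p i) := by
    rw [hlogρ, hρspec, trace_form U U p (fun i => Real.log (p i))]
    rw [Complex.ofReal_re]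
    have hid : star (U : Matrix (Fin n) (Fin n) ℂ) * (U : Matrix (Fin n) (Fin n) ℂ) = 1 :=
      (Matrix.mem_unitaryGroup_iff').mp U.2
    rw [hid]
    apply Finset.sum_congr rfl
    intro i _
    rw [Finset.sum_eq_single i]
    · simp
    · intro j _ hji
      simp [Matrix.one_apply, (Ne.symm hji)]
    · simp
  have h2 : (Matrix.trace (ρ * matLog σ)).re = ∑ i, ∑ j, p i * Real.log (q j) * c i j := by
    rw [hlogσ, hρspec, trace_form U V p (fun j => Real.log (q j))]
    rw [Complex.ofReal_re]
  have hrel : relEnt ρ σ = ∑ i, ∑ j, (p i * (Real.log (p i) - Real.log (q j))) * c i j := by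
    rw [relEnt, mul_sub, Matrix.trace_sub, Complex.sub_re, h1, h2]
    have hexp : ∑ i, p i * Real.log (p i) = ∑ i, ∑ j, p i * Real.log (p i) * c i j := by
      apply Finset.sum_congr rfl
      intro i _
      rw [← Finset.mul_sum, hrow i, mul_one]
    rw [hexp, ← Finset.sum_sub_distrib]
    apply Finset.sum_congr rfl
    intro i _
    rw [← Finset.sum_sub_distrib]
    apply Finset.sum_congr rfl
    intro j _
    ring
  rw [hrel]
  have hlow : ∑ i, ∑ j, (p i - q j) * c i j ≤
      ∑ i, ∑ j, (p i * (Real.log (p i) - Real.log (q j))) * c i j := by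
    apply Finset.sum_le_sum
    intro i _
    apply Finset.sum_le_sum
    intro j _
    exact mul_le_mul_of_nonneg_right (klein_term _ _ (hppos i) (hqpos j)) (hcnn i j)
  have hzero : ∑ i, ∑ j, (p i - q j) * c i j = 0 := by
    have : ∑ i, ∑ j, (p i - q j) * c i j
        = (∑ i, p i * ∑ j, c i j) - (∑ j, q j * ∑ i, c i j) := by
      simp only [sub_mul, Finset.sum_sub_distrib, Finset.mul_sum]
      congr 1
      rw [Finset.sum_comm]
    rw [this]
    simp only [hrow, hcol, mul_one, hsump, hsumq, sub_self]
  linarith
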